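/- There exist constants c₀ > 0 and c₁ > 0 such that for all positive reals x, y, z with min{x, y, z} > c₀, one has |log(sinh(F₁(x, y, z))) − E(x, y, z)| ≤ c₁. -/

import Mathlib

open Real

/-- Inverse hyperbolic cosine: `Arccosh w = log (w + √(w² − 1))` for `w ≥ 1`. -/
noncomputable def arccosh (w : ℝ) : ℝ := Real.log (w + Real.sqrt (w ^ 2 - 1))

/-- The function `F₁(x,y,z) = Arccosh((cosh z + cosh x · cosh y)/(sinh x · sinh y))`. -/
noncomputable def F₁ (x y z : ℝ) : ℝ :=
  arccosh ((Real.cosh z + Real.cosh x * Real.cosh y) / (Real.sinh x * Real.sinh y))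

/-- The piecewise linear function `E` on the positive octant. -/
noncomputable def E (x y z : ℝ) : ℝ :=
  if x + y ≤ z then z - x - y
  else if |x - y| ≤ z then (z - x - y) / 2
  else -min x y

lemma my_sinh_arccosh {w : ℝ} (hw : 1 < w) :
    Real.sinh (arccosh w) = Real.sqrt (w ^ 2 - 1) := by
  have h1 : 0 ≤ w ^ 2 - 1 := by nlinarith
  have hs : Real.sqrt (w ^ 2 - 1) ^ 2 = w ^ 2 - 1 := Real.sq_sqrt h1
  have hsqnn : 0 ≤ Real.sqrt (w ^ 2 - 1) := Real.sqrt_nonneg _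
  have hpos : 0 < w + Real.sqrt (w ^ 2 - 1) := by linarith
  rw [arccosh, Real.sinh_log hpos]
  have hinv : (w + Real.sqrt (w ^ 2 - 1))⁻¹ = w - Real.sqrt (w ^ 2 - 1) := by
    apply inv_eq_of_mul_eq_one_right
    nlinarith [hs]
  rw [hinv]; ring

lemma my_cosh_le_exp {a : ℝ} (ha : 0 ≤ a) : Real.cosh a ≤ Real.exp a := by
  rw [Real.cosh_eq]
  have h1 : Real.exp (-a) ≤ Real.exp a := Real.exp_le_exp.2 (by linarith)
  linarith

lemma my_exp_le_two_cosh (a : ℝ) : Real.exp a ≤ 2 * Real.cosh a := by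
  rw [Real.cosh_eq]
  have := Real.exp_pos (-a)
  linarith

/-- `|log (cosh a + cosh b) - max a b| ≤ log 2` for `a, b ≥ 0`. -/
lemma my_log_cosh_add_cosh {a b : ℝ} (ha : 0 ≤ a) (hb : 0 ≤ b) :
    |Real.log (Real.cosh a + Real.cosh b) - max a b| ≤ Real.log 2 := by
  set m := max a b with hm
  have hma : a ≤ m := le_max_left _ _
  have hmb : b ≤ m := le_max_right _ _
  have hm0 : 0 ≤ m := le_trans ha hma
  have hA : 0 < Real.cosh a + Real.cosh b := by positivity
  have hub : Real.cosh a + Real.cosh b ≤ 2 * Real.exp m := by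
    have h1 : Real.cosh a ≤ Real.exp m :=
      le_trans (my_cosh_le_exp ha) (Real.exp_le_exp.2 hma)
    have h2 : Real.cosh b ≤ Real.exp m :=
      le_trans (my_cosh_le_exp hb) (Real.exp_le_exp.2 hmb)
    linarith
  have hlb : Real.exp m / 2 ≤ Real.cosh a + Real.cosh b := by
    rcases max_cases a b with ⟨h, _⟩ | ⟨h, _⟩
    · have := my_exp_le_two_cosh a
      have := Real.cosh_pos (x := b)
      rw [hm, h]; linarith
    · have := my_exp_le_two_cosh b
      have := Real.cosh_pos (x := a)
      rw [hm, h]; linarith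
  have h1 : Real.log (Real.cosh a + Real.cosh b) ≤ m + Real.log 2 := by
    calc Real.log (Real.cosh a + Real.cosh b) ≤ Real.log (2 * Real.exp m) :=
          Real.log_le_log hA hub
      _ = Real.log 2 + m := by rw [Real.log_mul (by norm_num) (Real.exp_ne_zero m), Real.log_exp]
      _ = m + Real.log 2 := by ring
  have h2 : m - Real.log 2 ≤ Real.log (Real.cosh a + Real.cosh b) := by
    have := Real.log_le_log (by positivity : (0:ℝ) < Real.exp m / 2) hlb
    rwa [Real.log_div (Real.exp_ne_zero m) (by norm_num), Real.log_exp] at this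
  rw [abs_le]; constructor <;> linarith

/-- `|log (sinh x) - x| ≤ log 4` for `x ≥ 1`. -/
lemma my_log_sinh {x : ℝ} (hx : 1 ≤ x) :
    |Real.log (Real.sinh x) - x| ≤ Real.log 4 := by
  have hx0 : 0 < x := lt_of_lt_of_le one_pos hx
  have hsp : 0 < Real.sinh x := Real.sinh_pos_iff.2 hx0
  have hub : Real.sinh x ≤ Real.exp x := by
    rw [Real.sinh_eq]
    have := Real.exp_pos (-x)
    linarith [Real.exp_pos x]
  have hlb : Real.exp x / 4 ≤ Real.sinh x := by
    rw [Real.sinh_eq]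
    have hex : (2:ℝ) ≤ Real.exp x := by
      have := Real.add_one_le_exp x
      have h1 : Real.exp 1 ≤ Real.exp x := Real.exp_le_exp.2 hx
      nlinarith [Real.exp_one_gt_d9]
    have h2 : Real.exp (-x) ≤ Real.exp x / 4 := by
      rw [Real.exp_neg, inv_le_iff_one_le_mul₀ (Real.exp_pos x)] at *
      · nlinarith
    linarith
  have h1 : Real.log (Real.sinh x) ≤ x := by
    calc Real.log (Real.sinh x) ≤ Real.log (Real.exp x) := Real.log_le_log hsp hub
      _ = x := Real.log_exp x
  have h2 : x - Real.log 4 ≤ Real.log (Real.sinh x) := by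
    have := Real.log_le_log (by positivity : (0:ℝ) < Real.exp x / 4) hlb
    rwa [Real.log_div (Real.exp_ne_zero x) (by norm_num), Real.log_exp] at this
  have h4 : 0 < Real.log 4 := Real.log_pos (by norm_num)
  rw [abs_le]; constructor <;> linarith

/-- `E` as an exact max formula on the positive octant. -/
lemma my_E_eq {x y z : ℝ} (hx : 0 < x) (hy : 0 < y) :
    E x y z = max z |x - y| / 2 + max z (x + y) / 2 - x - y := by
  unfold E
  have habs : |x - y| ≤ x + y := by
    rw [abs_le]; constructor <;> linarith
  split_ifs with h1 h2
  · rw [max_eq_left (le_trans habs h1), max_eq_left h1]; ring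
  · push_neg at h1
    rw [max_eq_left h2, max_eq_right h1.le]
    ring
  · push_neg at h1 h2
    rw [max_eq_right h2.le, max_eq_right (le_trans h2.le habs)]
    rcases le_total x y with h | h
    · rw [abs_of_nonpos (by linarith), min_eq_left h]; ring
    · rw [abs_of_nonneg (by linarith), min_eq_right h]; ring

/-- Lemma (E:estimate): `log ∘ sinh ∘ F₁` is approximated by `E` up to a bounded error. -/
theorem stmt_6 :
    ∃ c₀ > (0 : ℝ), ∃ c₁ > (0 : ℝ),
      ∀ x y z : ℝ, 0 < x → 0 < y → 0 < z →
        min (min x y) z > c₀ →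
        |Real.log (Real.sinh (F₁ x y z)) - E x y z| ≤ c₁ := by
  refine ⟨1, one_pos, 4, by norm_num, ?_⟩
  intro x y z hx hy hz hmin
  have hx1 : 1 ≤ x := le_of_lt (lt_of_lt_of_le hmin ((min_le_left _ _).trans (min_le_left _ _)))
  have hy1 : 1 ≤ y := le_of_lt (lt_of_lt_of_le hmin ((min_le_left _ _).trans (min_le_right _ _)))
  have hz1 : 1 ≤ z := le_of_lt (lt_of_lt_of_le hmin (min_le_right _ _))
  have hsx : 0 < Real.sinh x := Real.sinh_pos_iff.2 hx
  have hsy : 0 < Real.sinh y := Real.sinh_pos_iff.2 hy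
  have hs : 0 < Real.sinh x * Real.sinh y := mul_pos hsx hsy
  set w := (Real.cosh z + Real.cosh x * Real.cosh y) / (Real.sinh x * Real.sinh y) with hwdef
  have hcxy : Real.cosh x * Real.cosh y - Real.sinh x * Real.sinh y = Real.cosh (x - y) :=
    (Real.cosh_sub x y).symm
  have hcz : 1 < Real.cosh z := Real.one_lt_cosh.2 (ne_of_gt hz)
  have hcsub : 1 ≤ Real.cosh (x - y) := Real.one_le_cosh _
  have hw : 1 < w := by
    rw [hwdef, lt_div_iff₀ hs, one_mul]
    linarith
  set A := Real.cosh z + Real.cosh (x - y) with hAdef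
  set B := Real.cosh z + Real.cosh (x + y) with hBdef
  have hA0 : 0 < A := by positivity
  have hB0 : 0 < B := by positivity
  have hkey : w ^ 2 - 1 = A * B / (Real.sinh x * Real.sinh y) ^ 2 := by
    rw [hwdef, div_pow, div_sub' (by positivity)]
    congr 1
    rw [hAdef, hBdef, Real.cosh_sub, Real.cosh_add]
    ring
  have hsinh : Real.sinh (F₁ x y z) = Real.sqrt A * Real.sqrt B / (Real.sinh x * Real.sinh y) := by
    rw [F₁, my_sinh_arccosh hw, hkey, Real.sqrt_div (by positivity),
      Real.sqrt_sq hs.le, Real.sqrt_mul hA0.le]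
  have hlog : Real.log (Real.sinh (F₁ x y z)) =
      Real.log A / 2 + Real.log B / 2 - Real.log (Real.sinh x) - Real.log (Real.sinh y) := by
    rw [hsinh, Real.log_div (by positivity) (ne_of_gt hs),
      Real.log_mul (by positivity) (by positivity),
      Real.log_mul (ne_of_gt hsx) (ne_of_gt hsy),
      Real.log_sqrt hA0.le, Real.log_sqrt hB0.le]
    ring
  have hbA : abs (Real.log A - max z (abs (x - y))) ≤ Real.log 2 := by
    have := my_log_cosh_add_cosh hz.le (abs_nonneg (x - y))
    rwa [Real.cosh_abs] at this
  have hbB : |Real.log B - max z (x + y)| ≤ Real.log 2 :=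
    my_log_cosh_add_cosh hz.le (by linarith)
  have hbx : |Real.log (Real.sinh x) - x| ≤ Real.log 4 := my_log_sinh hx1
  have hby : |Real.log (Real.sinh y) - y| ≤ Real.log 4 := my_log_sinh hy1
  have h4 : Real.log 4 = 2 * Real.log 2 := by
    rw [show (4:ℝ) = 2 ^ 2 by norm_num, Real.log_pow]; norm_num
  have hl2 : Real.log 2 < 0.6931471808 := Real.log_two_lt_d9
  rw [hlog, my_E_eq hx hy]
  rw [abs_le] at hbA hbB hbx hby ⊢
  constructor <;> [nlinarith; nlinarith]
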